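/- For integer λ ≥ 0, the Selberg-type integral S₃(λ) := ∫_{[0,1]³} |y₁−y₂|^{2λ}|y₁−y₃|^{2λ}|y₂−y₃|^{2λ} dy equals (−1)^λ ∑_{I₁₂,I₁₃,I₂₃=−λ}^{λ} (−1)^{I₁₂+I₁₃+I₂₃} C(2λ, λ+I₁₂) C(2λ, λ+I₁₃) C(2λ, λ+I₂₃) · [1/((1+2λ+I₁₂+I₁₃)(1+2λ−I₁₂+I₂₃)(1+2λ−I₁₃−I₂₃))]. -/

import Mathlib

open MeasureTheory Finset

lemma intPow (a : ℕ) : ∫ x in Set.Icc (0:ℝ) 1, x ^ a = 1 / ((a:ℝ) + 1) := by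
  rw [MeasureTheory.integral_Icc_eq_integral_Ioc,
    ← intervalIntegral.integral_of_le (zero_le_one (α := ℝ))]
  simp [integral_pow]

lemma cubeInt (a b c : ℕ) :
    ∫ y in (Set.Icc (0:ℝ) 1) ×ˢ ((Set.Icc (0:ℝ) 1) ×ˢ (Set.Icc (0:ℝ) 1)),
      y.1 ^ a * (y.2.1 ^ b * y.2.2 ^ c)
      = (1/((a:ℝ)+1)) * ((1/((b:ℝ)+1)) * (1/((c:ℝ)+1))) := by
  have h2 : ∫ p in (Set.Icc (0:ℝ) 1) ×ˢ (Set.Icc (0:ℝ) 1), (p.1 ^ b * p.2 ^ c : ℝ)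
      = (1/((b:ℝ)+1)) * (1/((c:ℝ)+1)) := by
    rw [Measure.volume_eq_prod,
      setIntegral_prod_mul (fun x : ℝ => x ^ b) (fun x : ℝ => x ^ c), intPow, intPow]
  calc ∫ y in (Set.Icc (0:ℝ) 1) ×ˢ ((Set.Icc (0:ℝ) 1) ×ˢ (Set.Icc (0:ℝ) 1)),
        y.1 ^ a * (y.2.1 ^ b * y.2.2 ^ c)
      = (∫ x in Set.Icc (0:ℝ) 1, x ^ a) *
        ∫ p in (Set.Icc (0:ℝ) 1) ×ˢ (Set.Icc (0:ℝ) 1), (p.1 ^ b * p.2 ^ c : ℝ) := by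
        rw [Measure.volume_eq_prod (α := ℝ) (β := ℝ × ℝ)]
        exact setIntegral_prod_mul (fun x : ℝ => x ^ a)
          (fun p : ℝ × ℝ => p.1 ^ b * p.2 ^ c) _ _
    _ = _ := by rw [intPow, h2]

lemma reindex3 (lam : ℕ) (f : ℤ → ℝ) :
    ∑ I ∈ Finset.Icc (-(lam:ℤ)) (lam:ℤ), f I
      = ∑ k ∈ Finset.range (2*lam+1), f ((k:ℤ) - lam) := by
  refine Finset.sum_nbij' (fun I => (I + lam).toNat) (fun k => (k:ℤ) - lam)
    ?_ ?_ ?_ ?_ ?_ <;> intro a ha <;>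
    simp only [Finset.mem_Icc, Finset.mem_range] at * <;> try omega
  congr 1; omega

lemma signEq (lam k1 k2 k3 : ℕ) :
    (-1:ℝ)^(k1+2*lam) * (-1:ℝ)^(k2+2*lam) * (-1:ℝ)^(k3+2*lam)
      = (-1:ℝ)^lam * ((-1:ℝ)^(k1+k2+k3) / (-1:ℝ)^(3*lam)) := by
  have h1 : (-1:ℝ)^(2*lam) = 1 := by simp [pow_mul]
  have h3 : (-1:ℝ)^(3*lam) = (-1:ℝ)^lam := by
    rw [show 3*lam = 2*lam+lam by ring, pow_add, h1, one_mul]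
  have hinv : ((-1:ℝ)^lam)⁻¹ = (-1:ℝ)^lam := by
    rw [← inv_pow]; norm_num
  rw [div_eq_mul_inv, h3, hinv]
  simp only [pow_add, h1, mul_one]
  have h1x : (-1:ℝ)^(lam*2) = 1 := by rw [mul_comm]; exact h1
  linear_combination (-((-1:ℝ)^k1 * (-1:ℝ)^k2 * (-1:ℝ)^k3)) * h1x

lemma sumPerm (m : ℕ) (h : ℕ → ℕ → ℕ → ℝ) :
    ∑ a ∈ range m, ∑ b ∈ range m, ∑ c ∈ range m, h c b a
      = ∑ a ∈ range m, ∑ b ∈ range m, ∑ c ∈ range m, h a b c := by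
  calc ∑ a ∈ range m, ∑ b ∈ range m, ∑ c ∈ range m, h c b a
      = ∑ a ∈ range m, ∑ c ∈ range m, ∑ b ∈ range m, h c b a :=
        Finset.sum_congr rfl fun a _ => Finset.sum_comm
    _ = ∑ c ∈ range m, ∑ a ∈ range m, ∑ b ∈ range m, h c b a := Finset.sum_comm
    _ = ∑ c ∈ range m, ∑ b ∈ range m, ∑ a ∈ range m, h c b a :=
        Finset.sum_congr rfl fun c _ => Finset.sum_comm

/-- Binomial-sum representation of `S₃(λ)` for integer `λ`. -/
theorem stmt11 (lam : ℕ) :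
    ∫ y in (Set.Icc (0 : ℝ) 1) ×ˢ ((Set.Icc (0 : ℝ) 1) ×ˢ (Set.Icc (0 : ℝ) 1)),
        |y.1 - y.2.1| ^ (2 * lam) * |y.1 - y.2.2| ^ (2 * lam) *
          |y.2.1 - y.2.2| ^ (2 * lam)
      = (-1 : ℝ) ^ lam *
        ∑ I12 ∈ Finset.Icc (-(lam : ℤ)) lam,
          ∑ I13 ∈ Finset.Icc (-(lam : ℤ)) lam,
            ∑ I23 ∈ Finset.Icc (-(lam : ℤ)) lam,
              (-1 : ℝ) ^ (I12 + I13 + I23) *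
                ((2 * lam).choose ((lam : ℤ) + I12).toNat : ℝ) *
                ((2 * lam).choose ((lam : ℤ) + I13).toNat : ℝ) *
                ((2 * lam).choose ((lam : ℤ) + I23).toNat : ℝ) *
                (1 / ((1 + 2 * (lam : ℝ) + (I12 : ℝ) + (I13 : ℝ)) *
                  (1 + 2 * (lam : ℝ) - (I12 : ℝ) + (I23 : ℝ)) *
                  (1 + 2 * (lam : ℝ) - (I13 : ℝ) - (I23 : ℝ)))) := by
  have hcomp : IsCompact ((Set.Icc (0:ℝ) 1) ×ˢ ((Set.Icc (0:ℝ) 1) ×ˢ (Set.Icc (0:ℝ) 1))) :=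
    isCompact_Icc.prod (isCompact_Icc.prod isCompact_Icc)
  set s : Set (ℝ × ℝ × ℝ) := (Set.Icc (0:ℝ) 1) ×ˢ ((Set.Icc (0:ℝ) 1) ×ˢ (Set.Icc (0:ℝ) 1)) with hs
  set n := 2 * lam with hn
  set T : ℕ → ℕ → ℕ → (ℝ × ℝ × ℝ) → ℝ := fun k1 k2 k3 y =>
    (((-1:ℝ)^(k1+n) * (n.choose k1)) * ((-1:ℝ)^(k2+n) * (n.choose k2)) *
      ((-1:ℝ)^(k3+n) * (n.choose k3))) *
      (y.1^(k1+k2) * (y.2.1^((n-k1)+k3) * y.2.2^((n-k2)+(n-k3)))) with hT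
  have hexp : (fun y : ℝ × ℝ × ℝ =>
      |y.1 - y.2.1| ^ n * |y.1 - y.2.2| ^ n * |y.2.1 - y.2.2| ^ n)
      = fun y => ∑ k1 ∈ range (n+1), ∑ k2 ∈ range (n+1), ∑ k3 ∈ range (n+1),
          T k3 k2 k1 y := by
    funext y
    have he : Even n := even_two_mul lam
    rw [he.pow_abs, he.pow_abs, he.pow_abs, sub_pow, sub_pow, sub_pow]
    simp only [Finset.sum_mul, Finset.mul_sum]
    refine Finset.sum_congr rfl fun k1 hk1 => Finset.sum_congr rfl fun k2 hk2 =>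
      Finset.sum_congr rfl fun k3 hk3 => ?_
    simp only [hT]
    ring
  have hTc : ∀ k1 k2 k3, Continuous (T k1 k2 k3) := by
    intro k1 k2 k3; simp only [hT]; fun_prop
  have hTi : ∀ k1 k2 k3, Integrable (T k1 k2 k3) (volume.restrict s) :=
    fun k1 k2 k3 => (hTc k1 k2 k3).continuousOn.integrableOn_compact hcomp
  calc ∫ y in s, |y.1 - y.2.1| ^ n * |y.1 - y.2.2| ^ n * |y.2.1 - y.2.2| ^ n
      = ∫ y in s, ∑ k1 ∈ range (n+1), ∑ k2 ∈ range (n+1), ∑ k3 ∈ range (n+1),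
          T k3 k2 k1 y := by rw [hexp]
    _ = ∑ k1 ∈ range (n+1), ∑ k2 ∈ range (n+1), ∑ k3 ∈ range (n+1),
          ∫ y in s, T k3 k2 k1 y := by
        rw [integral_finset_sum _ (fun k1 _ => by
          exact ((continuous_finset_sum _ fun k2 _ => continuous_finset_sum _
            fun k3 _ => hTc k3 k2 k1).continuousOn.integrableOn_compact hcomp))]
        refine Finset.sum_congr rfl fun k1 _ => ?_
        rw [integral_finset_sum _ (fun k2 _ => by
          exact ((continuous_finset_sum _ fun k3 _ =>
            hTc k3 k2 k1).continuousOn.integrableOn_compact hcomp))]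
        refine Finset.sum_congr rfl fun k2 _ => ?_
        exact integral_finset_sum _ fun k3 _ => hTi k3 k2 k1
    _ = ∑ k1 ∈ range (n+1), ∑ k2 ∈ range (n+1), ∑ k3 ∈ range (n+1),
          (fun k1 k2 k3 : ℕ =>
          (((-1:ℝ)^(k1+n) * (n.choose k1)) * ((-1:ℝ)^(k2+n) * (n.choose k2)) *
            ((-1:ℝ)^(k3+n) * (n.choose k3))) *
          ((1/(((k1+k2 : ℕ):ℝ)+1)) * ((1/((((n-k1)+k3 : ℕ):ℝ)+1)) *
            (1/((((n-k2)+(n-k3) : ℕ):ℝ)+1))))) k3 k2 k1 := by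
        refine Finset.sum_congr rfl fun k1 _ => Finset.sum_congr rfl fun k2 _ =>
          Finset.sum_congr rfl fun k3 _ => ?_
        simp only [hT]
        rw [MeasureTheory.integral_const_mul, hs, cubeInt]
    _ = ∑ k1 ∈ range (n+1), ∑ k2 ∈ range (n+1), ∑ k3 ∈ range (n+1),
          (((-1:ℝ)^(k1+n) * (n.choose k1)) * ((-1:ℝ)^(k2+n) * (n.choose k2)) *
            ((-1:ℝ)^(k3+n) * (n.choose k3))) *
          ((1/(((k1+k2 : ℕ):ℝ)+1)) * ((1/((((n-k1)+k3 : ℕ):ℝ)+1)) *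
            (1/((((n-k2)+(n-k3) : ℕ):ℝ)+1)))) := sumPerm (n+1) _
    _ = (-1 : ℝ) ^ lam *
        ∑ I12 ∈ Finset.Icc (-(lam : ℤ)) lam,
          ∑ I13 ∈ Finset.Icc (-(lam : ℤ)) lam,
            ∑ I23 ∈ Finset.Icc (-(lam : ℤ)) lam,
              (-1 : ℝ) ^ (I12 + I13 + I23) *
                ((2 * lam).choose ((lam : ℤ) + I12).toNat : ℝ) *
                ((2 * lam).choose ((lam : ℤ) + I13).toNat : ℝ) *
                ((2 * lam).choose ((lam : ℤ) + I23).toNat : ℝ) *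
                (1 / ((1 + 2 * (lam : ℝ) + (I12 : ℝ) + (I13 : ℝ)) *
                  (1 + 2 * (lam : ℝ) - (I12 : ℝ) + (I23 : ℝ)) *
                  (1 + 2 * (lam : ℝ) - (I13 : ℝ) - (I23 : ℝ)))) := by
        simp only [reindex3 lam]
        rw [Finset.mul_sum]
        refine Finset.sum_congr rfl fun k1 hk1 => ?_
        rw [Finset.mul_sum]
        refine Finset.sum_congr rfl fun k2 hk2 => ?_
        rw [Finset.mul_sum]
        refine Finset.sum_congr rfl fun k3 hk3 => ?_
        rw [Finset.mem_range] at hk1 hk2 hk3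
        have hk1' : k1 ≤ n := by omega
        have hk2' : k2 ≤ n := by omega
        have hk3' : k3 ≤ n := by omega
        rw [show ((lam:ℤ) + ((k1:ℤ) - lam)).toNat = k1 by omega,
          show ((lam:ℤ) + ((k2:ℤ) - lam)).toNat = k2 by omega,
          show ((lam:ℤ) + ((k3:ℤ) - lam)).toNat = k3 by omega]
        have hz : (-1:ℝ)^(((k1:ℤ)-lam)+((k2:ℤ)-lam)+((k3:ℤ)-lam))
            = (-1:ℝ)^(k1+k2+k3) / (-1:ℝ)^(3*lam) := by
          rw [show ((k1:ℤ)-lam)+((k2:ℤ)-lam)+((k3:ℤ)-lam)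
              = ((k1+k2+k3 : ℕ):ℤ) - ((3*lam : ℕ):ℤ) by push_cast; ring,
            zpow_sub₀ (by norm_num : (-1:ℝ) ≠ 0), zpow_natCast, zpow_natCast]
        rw [hz]
        have hA : (1 + 2*(lam:ℝ) + ((((k1:ℤ) - lam) : ℤ):ℝ) + ((((k2:ℤ) - lam) : ℤ):ℝ))
            = ((k1+k2 : ℕ):ℝ) + 1 := by push_cast; ring
        have hB : (1 + 2*(lam:ℝ) - ((((k1:ℤ) - lam) : ℤ):ℝ) + ((((k3:ℤ) - lam) : ℤ):ℝ))
            = (((n-k1)+k3 : ℕ):ℝ) + 1 := by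
          rw [Nat.cast_add, Nat.cast_sub hk1']; push_cast [hn]; ring
        have hC : (1 + 2*(lam:ℝ) - ((((k2:ℤ) - lam) : ℤ):ℝ) - ((((k3:ℤ) - lam) : ℤ):ℝ))
            = (((n-k2)+(n-k3) : ℕ):ℝ) + 1 := by
          rw [Nat.cast_add, Nat.cast_sub hk2', Nat.cast_sub hk3']; push_cast [hn]; ring
        rw [hA, hB, hC]
        have hsg := signEq lam k1 k2 k3
        rw [← hn] at hsg
        calc (((-1:ℝ)^(k1+n) * (n.choose k1)) * ((-1:ℝ)^(k2+n) * (n.choose k2)) *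
              ((-1:ℝ)^(k3+n) * (n.choose k3))) *
              ((1/(((k1+k2 : ℕ):ℝ)+1)) * ((1/((((n-k1)+k3 : ℕ):ℝ)+1)) *
                (1/((((n-k2)+(n-k3) : ℕ):ℝ)+1))))
            = ((-1:ℝ)^(k1+n) * (-1:ℝ)^(k2+n) * (-1:ℝ)^(k3+n)) *
              (((n.choose k1) : ℝ) * (n.choose k2) * (n.choose k3)) *
              ((1/(((k1+k2 : ℕ):ℝ)+1)) * ((1/((((n-k1)+k3 : ℕ):ℝ)+1)) *
                (1/((((n-k2)+(n-k3) : ℕ):ℝ)+1)))) := by ring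
          _ = ((-1:ℝ)^lam * ((-1:ℝ)^(k1+k2+k3) / (-1:ℝ)^(3*lam))) *
              (((n.choose k1) : ℝ) * (n.choose k2) * (n.choose k3)) *
              ((1/(((k1+k2 : ℕ):ℝ)+1)) * ((1/((((n-k1)+k3 : ℕ):ℝ)+1)) *
                (1/((((n-k2)+(n-k3) : ℕ):ℝ)+1)))) := by rw [hsg]
          _ = _ := by rw [hn]; simp only [one_div, mul_inv]; ring
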